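/- arXiv:2301.08844 — 3 statements merged into one kernel-verified Lean document; each statement's English description precedes it below -/
import Mathlib

section
/- Let (a_1,...,a_m) and (b_1,...,b_m) be nonnegative real vectors with ∑_{j=1}^m (a_j − b_j)^2 ≤ β for some β ≥ 0, and suppose ∑_j a_j > 0 and ∑_j b_j > 0. Then for every index l, |a_l/(∑_j a_j) − b_l/(∑_j b_j)|^2 ≤ 2mβ/(∑_j b_j)^2. -/
theorem stmt_1 (m : ℕ) (a b : Fin m → ℝ) (β : ℝ) (hβ : 0 ≤ β)
    (ha : ∀ j, 0 ≤ a j) (hb : ∀ j, 0 ≤ b j)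
    (hdiff : ∑ j, (a j - b j) ^ 2 ≤ β)
    (hsa : 0 < ∑ j, a j) (hsb : 0 < ∑ j, b j) :
    ∀ l : Fin m, |a l / (∑ j, a j) - b l / (∑ j, b j)| ^ 2 ≤ 2 * m * β / (∑ j, b j) ^ 2 := by
  intro l
  set A := ∑ j, a j with hA
  set B := ∑ j, b j with hB
  have hA0 : A ≠ 0 := ne_of_gt hsa
  have hB0 : B ≠ 0 := ne_of_gt hsb
  set t : ℝ := a l / A with htdef
  have ht0 : 0 ≤ t := div_nonneg (ha l) hsa.le
  have halA : a l ≤ A := Finset.single_le_sum (fun j _ => ha j) (Finset.mem_univ l)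
  have ht1 : t ≤ 1 := div_le_one_of_le₀ halA hsa.le
  set w : Fin m → ℝ := fun j => (if j = l then (1:ℝ) else 0) - t with hw
  have key : B * (a l / A - b l / B) = ∑ j, w j * (a j - b j) := by
    have hsum : ∑ j, w j * (a j - b j)
        = (a l - b l) - t * (A - B) := by
      simp only [hw, sub_mul, ite_mul, one_mul, zero_mul]
      rw [Finset.sum_sub_distrib, Finset.sum_ite_eq' Finset.univ l (fun j => a j - b j)]
      simp [Finset.mul_sum, mul_sub, Finset.sum_sub_distrib, hA, hB]
    rw [hsum, htdef]
    field_simp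
    ring
  have cauchy : (∑ j, w j * (a j - b j)) ^ 2 ≤ (∑ j, w j ^ 2) * ∑ j, (a j - b j) ^ 2 :=
    Finset.sum_mul_sq_le_sq_mul_sq Finset.univ w (fun j => a j - b j)
  have hwbound : (∑ j, w j ^ 2) ≤ m := by
    calc (∑ j, w j ^ 2) ≤ ∑ _j : Fin m, (1:ℝ) := by
          apply Finset.sum_le_sum
          intro j _
          simp only [hw]
          by_cases hj : j = l
          · simp only [hj, if_pos rfl, if_true]
            nlinarith
          · simp only [if_neg hj]
            nlinarith
      _ = m := by simp
  have hBd : (B * (a l / A - b l / B)) ^ 2 ≤ m * β := by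
    rw [key]
    calc (∑ j, w j * (a j - b j)) ^ 2 ≤ (∑ j, w j ^ 2) * ∑ j, (a j - b j) ^ 2 := cauchy
      _ ≤ m * β := by
          apply mul_le_mul hwbound hdiff (Finset.sum_nonneg fun j _ => sq_nonneg _)
            (Nat.cast_nonneg m)
  have hmain : (a l / A - b l / B) ^ 2 ≤ m * β / B ^ 2 := by
    rw [le_div_iff₀ (by positivity : (0:ℝ) < B ^ 2)]
    nlinarith [hBd]
  rw [sq_abs]
  calc (a l / A - b l / B) ^ 2 ≤ m * β / B ^ 2 := hmain
    _ ≤ 2 * m * β / B ^ 2 := by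
        apply div_le_div_of_nonneg_right ?_ (by positivity) |>.trans_eq rfl
        · nlinarith [Nat.cast_nonneg (α := ℝ) m]
  done
end

section
/- Let a_1,...,a_m be nonnegative reals summing to 1, let v_1,...,v_m be reals, set S = ∑_i max(a_i+v_i, 0), and assume max_i |v_i| ≤ M with mM < 1 (so S > 0). Define b_i = max(a_i+v_i,0)/S. Then max_i |a_i − b_i| ≤ (M + mM)/(1 − mM). -/
theorem stmt_2 (m : ℕ) (a v : Fin m → ℝ) (M : ℝ)
    (ha : ∀ i, 0 ≤ a i) (hsum : ∑ i, a i = 1)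
    (hv : ∀ i, |v i| ≤ M) (hM : m * M < 1)
    (b : Fin m → ℝ)
    (hb : ∀ i, b i = max (a i + v i) 0 / ∑ j, max (a j + v j) 0) :
    ∀ i, |a i - b i| ≤ (M + m * M) / (1 - m * M) := by
  intro i
  have hM0 : 0 ≤ M := le_trans (abs_nonneg _) (hv i)
  set S := ∑ j, max (a j + v j) 0 with hS
  have hmM0 : (0:ℝ) ≤ m * M := by positivity
  have hSlb : 1 - (m:ℝ) * M ≤ S := by
    have h1 : ∑ j, (a j + v j) ≤ S := Finset.sum_le_sum (fun j _ => le_max_left _ _)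
    have h3 : ∑ j, (-M) ≤ ∑ j, v j :=
      Finset.sum_le_sum (fun j _ => neg_le_of_abs_le (hv j))
    have h4 : ∑ j, (a j + v j) = 1 + ∑ j, v j := by
      rw [Finset.sum_add_distrib, hsum]
    have h5 : (∑ _j : Fin m, (-M)) = -((m:ℝ) * M) := by
      simp [Finset.sum_const, mul_comm]
    rw [h5] at h3
    linarith
  have hSub : S ≤ 1 + (m:ℝ) * M := by
    have hle : ∀ j, max (a j + v j) 0 ≤ a j + M := by
      intro j
      have h1 := abs_le.mp (hv j)
      have h2 := ha j
      apply max_le <;> linarith [h1.1, h1.2]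
    calc S ≤ ∑ j, (a j + M) := Finset.sum_le_sum (fun j _ => hle j)
    _ = 1 + (m:ℝ) * M := by
        rw [Finset.sum_add_distrib, hsum, Finset.sum_const]
        simp [mul_comm]
  have hSpos : 0 < S := by linarith
  have hai1 : a i ≤ 1 := by
    have := Finset.single_le_sum (fun j _ => ha j) (Finset.mem_univ i)
    linarith
  have hci : |a i - max (a i + v i) 0| ≤ M := by
    have h1 := abs_le.mp (hv i)
    have h2 := ha i
    rcases le_or_gt 0 (a i + v i) with h | h
    · rw [max_eq_left h, abs_le]; constructor <;> linarith [h1.1, h1.2]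
    · rw [max_eq_right h.le, abs_le]; constructor <;> linarith [h1.1, h1.2]
  have key : |a i * S - max (a i + v i) 0| ≤ M + (m:ℝ) * M := by
    have heq : a i * S - max (a i + v i) 0
        = a i * (S - 1) + (a i - max (a i + v i) 0) := by ring
    rw [heq]
    have h6 : |a i * (S - 1)| ≤ (m:ℝ) * M := by
      rw [abs_mul, abs_of_nonneg (ha i)]
      have h7 : |S - 1| ≤ (m:ℝ) * M := by
        rw [abs_le]; constructor <;> linarith
      calc a i * |S - 1| ≤ 1 * ((m:ℝ) * M) := by
            apply mul_le_mul hai1 h7 (abs_nonneg _) (by norm_num)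
      _ = (m:ℝ) * M := by ring
    calc |a i * (S - 1) + (a i - max (a i + v i) 0)|
        ≤ |a i * (S - 1)| + |a i - max (a i + v i) 0| := abs_add_le _ _
    _ ≤ (m:ℝ) * M + M := add_le_add h6 hci
    _ = M + (m:ℝ) * M := by ring
  rw [hb i]
  have heq2 : a i - max (a i + v i) 0 / S = (a i * S - max (a i + v i) 0) / S := by
    field_simp
  rw [heq2, abs_div, abs_of_pos hSpos]
  calc |a i * S - max (a i + v i) 0| / S ≤ (M + (m:ℝ) * M) / S :=
        by gcongr
  _ ≤ (M + (m:ℝ) * M) / (1 - (m:ℝ) * M) := by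
        gcongr <;> linarith
end

section
/- Let d ≥ 1, and for i = 1,…,d let P_i(·|·) and Q_i(·|·) be conditional probability kernels defining product-form distributions P(x₁,…,x_d) = ∏_i P_i(x_i | x_{Π_i}) and Q(x₁,…,x_d) = ∏_i Q_i(x_i | x_{Π_i}) on {0,1}^d, where each parent set Π_i ⊆ {1,…,i−1}. If for every i and every configuration, |P_i(x_i | x_{Π_i}) − Q_i(x_i | x_{Π_i})| ≤ c / P(x_{Π_i}) whenever P(x_{Π_i}) > 0 (and Q_i = P_i on zero-probability parent configurations), and |Π_i| ≤ k for all i, then ∑_{x ∈ {0,1}^d} |P(x) − Q(x)| ≤ 2·d·2^k·c. -/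
open Finset Function

private lemma pairSplit {d : ℕ} (i : Fin d) (p : (Fin d → Bool) → Prop) [DecidablePred p]
    (hp : ∀ x b, p (Function.update x i b) ↔ p x)
    (g : (Fin d → Bool) → ℝ) :
    ∑ x ∈ Finset.univ.filter p, g x
      = ∑ x ∈ Finset.univ.filter (fun x => p x ∧ x i = false),
          (g x + g (Function.update x i true)) := by
  have hsplit := Finset.sum_filter_add_sum_filter_not (Finset.univ.filter p)
    (fun x => x i = false) g
  rw [Finset.filter_filter, Finset.filter_filter] at hsplit
  have htrue : ∑ x ∈ Finset.univ.filter (fun x => p x ∧ ¬ x i = false), g x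
      = ∑ x ∈ Finset.univ.filter (fun x => p x ∧ x i = false), g (Function.update x i true) := by
    apply Finset.sum_nbij' (fun x => Function.update x i false) (fun x => Function.update x i true)
    · intro a ha
      simp only [Finset.mem_filter, Finset.mem_univ, true_and] at ha ⊢
      exact ⟨(hp a false).2 ha.1, by simp⟩
    · intro a ha
      simp only [Finset.mem_filter, Finset.mem_univ, true_and] at ha ⊢
      exact ⟨(hp a true).2 ha.1, by simp⟩
    · intro a ha
      simp only [Finset.mem_filter, Finset.mem_univ, true_and] at ha
      have : a i = true := by simpa using ha.2
      funext j
      rcases eq_or_ne j i with rfl | hj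
      · simp [this]
      · simp [Function.update_of_ne hj]
    · intro a ha
      simp only [Finset.mem_filter, Finset.mem_univ, true_and] at ha
      funext j
      rcases eq_or_ne j i with rfl | hj
      · simp [ha.2]
      · simp [Function.update_of_ne hj]
    · intro a ha
      congr 1
      simp only [Finset.mem_filter, Finset.mem_univ, true_and] at ha
      have : a i = true := by simpa using ha.2
      funext j
      rcases eq_or_ne j i with rfl | hj
      · simp [this]
      · simp [Function.update_of_ne hj]
  rw [htrue] at hsplit
  rw [← hsplit, Finset.sum_add_distrib]

private lemma sumOut {d : ℕ} (i : Fin d) (p : (Fin d → Bool) → Prop) [DecidablePred p]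
    (hp : ∀ x b, p (Function.update x i b) ↔ p x)
    (f K : (Fin d → Bool) → ℝ)
    (hf : ∀ x b, f (Function.update x i b) = f x)
    (hK : ∀ x, ∑ b : Bool, K (Function.update x i b) = 1) :
    ∑ x ∈ Finset.univ.filter p, f x * K x
      = ∑ x ∈ Finset.univ.filter (fun x => p x ∧ x i = false), f x := by
  rw [pairSplit i p hp]
  apply Finset.sum_congr rfl
  intro x hx
  simp only [Finset.mem_filter, Finset.mem_univ, true_and] at hx
  have h1 : Function.update x i false = x := by
    funext j
    rcases eq_or_ne j i with rfl | hj
    · simp [hx.2]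
    · simp [Function.update_of_ne hj]
  have hk := hK x
  rw [Fintype.sum_bool, h1] at hk
  rw [hf x true]
  linear_combination f x * hk

private lemma tailSum {d : ℕ} (K : Fin d → (Fin d → Bool) → ℝ)
    (hK_dep : ∀ (i : Fin d) (x y : Fin d → Bool),
      (∀ j : Fin d, (j : ℕ) ≤ (i : ℕ) → x j = y j) → K i x = K i y)
    (hK_sum : ∀ (i : Fin d) (x : Fin d → Bool),
      ∑ b : Bool, K i (Function.update x i b) = 1)
    (j : ℕ)
    (f : (Fin d → Bool) → ℝ)
    (hf : ∀ x y : Fin d → Bool, (∀ i : Fin d, (i : ℕ) < j → x i = y i) → f x = f y)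
    (q : (Fin d → Bool) → Prop) [DecidablePred q]
    (hq : ∀ x y : Fin d → Bool, (∀ i : Fin d, (i : ℕ) < j → x i = y i) → (q x ↔ q y)) :
    ∀ t, j ≤ t → t ≤ d →
    (∑ x ∈ Finset.univ.filter (fun x => q x ∧ ∀ i : Fin d, t ≤ (i : ℕ) → x i = false),
        f x * ∏ i ∈ Finset.univ.filter (fun i : Fin d => j ≤ (i : ℕ) ∧ (i : ℕ) < t), K i x)
      = ∑ x ∈ Finset.univ.filter (fun x => q x ∧ ∀ i : Fin d, j ≤ (i : ℕ) → x i = false), f x := by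
  intro t ht
  induction t, ht using Nat.le_induction with
  | base =>
    intro _
    have hempty : Finset.univ.filter (fun i : Fin d => j ≤ (i : ℕ) ∧ (i : ℕ) < j) = ∅ := by
      apply Finset.filter_false_of_mem
      intro i _
      omega
    simp [hempty]
  | succ t ht ih =>
    intro htd
    have htd' : t < d := htd
    set it : Fin d := ⟨t, htd'⟩ with hit
    have hfilt : Finset.univ.filter (fun i : Fin d => j ≤ (i : ℕ) ∧ (i : ℕ) < t + 1)
        = insert it (Finset.univ.filter (fun i : Fin d => j ≤ (i : ℕ) ∧ (i : ℕ) < t)) := by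
      ext i
      simp only [Finset.mem_filter, Finset.mem_univ, true_and, Finset.mem_insert]
      constructor
      · rintro ⟨h1, h2⟩
        rcases eq_or_lt_of_le (Nat.lt_succ_iff.mp h2) with heq | hlt
        · left; exact Fin.ext heq
        · right; exact ⟨h1, hlt⟩
      · rintro (rfl | ⟨h1, h2⟩)
        · exact ⟨ht, Nat.lt_succ_self t⟩
        · exact ⟨h1, h2.trans (Nat.lt_succ_self t)⟩
    have hnotmem : it ∉ Finset.univ.filter (fun i : Fin d => j ≤ (i : ℕ) ∧ (i : ℕ) < t) := by
      simp [hit]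
    -- rewrite the LHS product
    have step1 :
        (∑ x ∈ Finset.univ.filter (fun x => q x ∧ ∀ i : Fin d, t + 1 ≤ (i : ℕ) → x i = false),
          f x * ∏ i ∈ Finset.univ.filter (fun i : Fin d => j ≤ (i : ℕ) ∧ (i : ℕ) < t + 1), K i x)
        = ∑ x ∈ Finset.univ.filter
            (fun x => (q x ∧ ∀ i : Fin d, t + 1 ≤ (i : ℕ) → x i = false) ∧ x it = false),
          f x * ∏ i ∈ Finset.univ.filter (fun i : Fin d => j ≤ (i : ℕ) ∧ (i : ℕ) < t), K i x := by
      have := sumOut it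
        (fun x => q x ∧ ∀ i : Fin d, t + 1 ≤ (i : ℕ) → x i = false)
        (by
          intro x b
          have hagree : ∀ i : Fin d, (i : ℕ) < j → (Function.update x it b) i = x i := by
            intro i hi
            apply Function.update_of_ne
            intro hcontra
            rw [hcontra] at hi
            simp only [hit] at hi
            omega
          constructor
          · rintro ⟨h1, h2⟩
            refine ⟨(hq _ _ hagree).1 h1, ?_⟩
            intro i hi
            have := h2 i hi
            rwa [Function.update_of_ne (by
              intro hcontra
              rw [hcontra] at hi
              simp only [hit] at hi
              omega)] at this
          · rintro ⟨h1, h2⟩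
            refine ⟨(hq _ _ hagree).2 h1, ?_⟩
            intro i hi
            rw [Function.update_of_ne (by
              intro hcontra
              rw [hcontra] at hi
              simp only [hit] at hi
              omega)]
            exact h2 i hi)
        (fun x => f x * ∏ i ∈ Finset.univ.filter (fun i : Fin d => j ≤ (i : ℕ) ∧ (i : ℕ) < t), K i x)
        (K it)
        (by
          intro x b
          have h1 : f (Function.update x it b) = f x := by
            apply hf
            intro i hi
            apply Function.update_of_ne
            intro hcontra
            rw [hcontra] at hi
            simp only [hit] at hi
            omega
          have h2 : (∏ i ∈ Finset.univ.filter (fun i : Fin d => j ≤ (i : ℕ) ∧ (i : ℕ) < t),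
              K i (Function.update x it b))
              = ∏ i ∈ Finset.univ.filter (fun i : Fin d => j ≤ (i : ℕ) ∧ (i : ℕ) < t), K i x := by
            apply Finset.prod_congr rfl
            intro i hi
            simp only [Finset.mem_filter, Finset.mem_univ, true_and] at hi
            apply hK_dep
            intro j' hj'
            apply Function.update_of_ne
            intro hcontra
            rw [hcontra] at hj'
            simp only [hit] at hj'
            omega
          rw [h1, h2])
        (hK_sum it)
      calc (∑ x ∈ Finset.univ.filter
              (fun x => q x ∧ ∀ i : Fin d, t + 1 ≤ (i : ℕ) → x i = false),
            f x * ∏ i ∈ Finset.univ.filter (fun i : Fin d => j ≤ (i : ℕ) ∧ (i : ℕ) < t + 1), K i x)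
          = ∑ x ∈ Finset.univ.filter
              (fun x => q x ∧ ∀ i : Fin d, t + 1 ≤ (i : ℕ) → x i = false),
            (f x * ∏ i ∈ Finset.univ.filter (fun i : Fin d => j ≤ (i : ℕ) ∧ (i : ℕ) < t), K i x)
              * K it x := by
            apply Finset.sum_congr rfl
            intro x _
            rw [hfilt, Finset.prod_insert hnotmem]
            ring
        _ = _ := this
    rw [step1]
    have hsets : Finset.univ.filter
        (fun x => (q x ∧ ∀ i : Fin d, t + 1 ≤ (i : ℕ) → x i = false) ∧ x it = false)
        = Finset.univ.filter (fun x => q x ∧ ∀ i : Fin d, t ≤ (i : ℕ) → x i = false) := by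
      apply Finset.filter_congr
      intro x _
      constructor
      · rintro ⟨⟨h1, h2⟩, h3⟩
        refine ⟨h1, ?_⟩
        intro i hi
        rcases eq_or_lt_of_le hi with heq | hlt
        · have : i = it := Fin.ext heq.symm
          rw [this]; exact h3
        · exact h2 i hlt
      · rintro ⟨h1, h2⟩
        exact ⟨⟨h1, fun i hi => h2 i (le_of_lt hi)⟩, h2 it le_rfl⟩
    rw [hsets]
    exact ih (le_of_lt htd')

theorem stmt_19 (d : ℕ) (hd : 1 ≤ d) (k : ℕ) (c : ℝ) (hc : 0 ≤ c)
    (Par : Fin d → Finset (Fin d))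
    (hPar_lt : ∀ i, ∀ j ∈ Par i, j < i)
    (hPar_card : ∀ i, (Par i).card ≤ k)
    (Pc Qc : Fin d → (Fin d → Bool) → ℝ)
    -- each Pc i x = P_i(x_i | x_{Π_i}) depends only on coordinates in {i} ∪ Π i
    (hPc_dep : ∀ i, ∀ x y : Fin d → Bool, (∀ j ∈ insert i (Par i), x j = y j) → Pc i x = Pc i y)
    (hQc_dep : ∀ i, ∀ x y : Fin d → Bool, (∀ j ∈ insert i (Par i), x j = y j) → Qc i x = Qc i y)
    (hPc_nonneg : ∀ i x, 0 ≤ Pc i x) (hQc_nonneg : ∀ i x, 0 ≤ Qc i x)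
    (hPc_sum : ∀ i (x : Fin d → Bool), ∑ b : Bool, Pc i (Function.update x i b) = 1)
    (hQc_sum : ∀ i (x : Fin d → Bool), ∑ b : Bool, Qc i (Function.update x i b) = 1)
    -- marginal of the parent configuration under P
    (marg : Fin d → (Fin d → Bool) → ℝ)
    (hmarg : ∀ i x, marg i x =
      ∑ y ∈ Finset.univ.filter (fun y : Fin d → Bool => ∀ j ∈ Par i, y j = x j),
        ∏ i', Pc i' y)
    (hclose : ∀ i (x : Fin d → Bool),
      (0 < marg i x → |Pc i x - Qc i x| ≤ c / marg i x) ∧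
      (marg i x = 0 → Qc i x = Pc i x)) :
    ∑ x : Fin d → Bool, |(∏ i, Pc i x) - ∏ i, Qc i x| ≤ 2 * d * 2 ^ k * c := by
  classical
  have hPdep : ∀ (i : Fin d) (x y : Fin d → Bool),
      (∀ j : Fin d, (j : ℕ) ≤ (i : ℕ) → x j = y j) → Pc i x = Pc i y := by
    intro i x y h
    apply hPc_dep
    intro j hj
    rcases Finset.mem_insert.mp hj with rfl | hj'
    · exact h j le_rfl
    · exact h j (le_of_lt (hPar_lt i j hj'))
  have hQdep : ∀ (i : Fin d) (x y : Fin d → Bool),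
      (∀ j : Fin d, (j : ℕ) ≤ (i : ℕ) → x j = y j) → Qc i x = Qc i y := by
    intro i x y h
    apply hQc_dep
    intro j hj
    rcases Finset.mem_insert.mp hj with rfl | hj'
    · exact h j le_rfl
    · exact h j (le_of_lt (hPar_lt i j hj'))
  -- the hybrid products
  set T : ℕ → (Fin d → Bool) → ℝ :=
    fun t x => ∏ i : Fin d, (if (i : ℕ) < t then Pc i x else Qc i x) with hT
  have hT0 : ∀ x, T 0 x = ∏ i, Qc i x := by
    intro x; simp [hT]
  have hTd : ∀ x, T d x = ∏ i, Pc i x := by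
    intro x
    rw [hT]
    exact Finset.prod_congr rfl (fun i _ => if_pos i.isLt)
  -- telescoping
  have tele : ∀ x : Fin d → Bool,
      |(∏ i, Pc i x) - ∏ i, Qc i x| ≤ ∑ t ∈ Finset.range d, |T (t + 1) x - T t x| := by
    intro x
    rw [← hT0 x, ← hTd x]
    have hts : T d x - T 0 x = ∑ t ∈ Finset.range d, (T (t + 1) x - T t x) :=
      (Finset.sum_range_sub (fun t => T t x) d).symm
    rw [hts]
    exact Finset.abs_sum_le_sum_abs _ _
  -- the key per-coordinate bound
  have key : ∀ t ∈ Finset.range d,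
      (∑ x : Fin d → Bool, |T (t + 1) x - T t x|) ≤ 2 ^ k * (2 * c) := by
    intro t htmem
    have htd : t < d := Finset.mem_range.mp htmem
    set jf : Fin d := ⟨t, htd⟩ with hjf
    have hjft : (jf : ℕ) = t := rfl
    -- product splitting
    have hfilt2 : Finset.univ.filter (fun i : Fin d => ¬ ((i : ℕ) < t))
        = insert jf (Finset.univ.filter (fun i : Fin d => t + 1 ≤ (i : ℕ) ∧ (i : ℕ) < d)) := by
      ext i
      simp only [Finset.mem_filter, Finset.mem_univ, true_and, Finset.mem_insert, not_lt]
      constructor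
      · intro h
        rcases eq_or_lt_of_le h with heq | hlt
        · left; exact Fin.ext heq.symm
        · right; exact ⟨hlt, i.isLt⟩
      · rintro (rfl | ⟨h1, _⟩)
        · exact le_rfl
        · omega
    have hnm : jf ∉ Finset.univ.filter (fun i : Fin d => t + 1 ≤ (i : ℕ) ∧ (i : ℕ) < d) := by
      simp [hjf]
    have hsplit : ∀ g : Fin d → ℝ, (∏ i, g i) =
        ((∏ i ∈ Finset.univ.filter (fun i : Fin d => (i : ℕ) < t), g i) * g jf) *
          ∏ i ∈ Finset.univ.filter (fun i : Fin d => t + 1 ≤ (i : ℕ) ∧ (i : ℕ) < d), g i := by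
      intro g
      rw [← Finset.prod_filter_mul_prod_filter_not Finset.univ (fun i : Fin d => (i : ℕ) < t) g,
        hfilt2, Finset.prod_insert hnm]
      ring
    -- the difference identity
    have hdiff : ∀ x : Fin d → Bool, T (t + 1) x - T t x =
        ((∏ i ∈ Finset.univ.filter (fun i : Fin d => (i : ℕ) < t), Pc i x)
          * (Pc jf x - Qc jf x)) *
          ∏ i ∈ Finset.univ.filter (fun i : Fin d => t + 1 ≤ (i : ℕ) ∧ (i : ℕ) < d), Qc i x := by
      intro x
      have e1 : T (t + 1) x =
          ((∏ i ∈ Finset.univ.filter (fun i : Fin d => (i : ℕ) < t), Pc i x) * Pc jf x) *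
            ∏ i ∈ Finset.univ.filter (fun i : Fin d => t + 1 ≤ (i : ℕ) ∧ (i : ℕ) < d), Qc i x := by
        simp only [hT]
        rw [hsplit (fun i : Fin d => if (i : ℕ) < t + 1 then Pc i x else Qc i x)]
        congr 1
        · congr 1
          · apply Finset.prod_congr rfl
            intro i hi
            simp only [Finset.mem_filter, Finset.mem_univ, true_and] at hi
            exact if_pos (by omega)
          · exact if_pos (by omega)
        · apply Finset.prod_congr rfl
          intro i hi
          simp only [Finset.mem_filter, Finset.mem_univ, true_and] at hi
          exact if_neg (by omega)
      have e2 : T t x =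
          ((∏ i ∈ Finset.univ.filter (fun i : Fin d => (i : ℕ) < t), Pc i x) * Qc jf x) *
            ∏ i ∈ Finset.univ.filter (fun i : Fin d => t + 1 ≤ (i : ℕ) ∧ (i : ℕ) < d), Qc i x := by
        simp only [hT]
        rw [hsplit (fun i : Fin d => if (i : ℕ) < t then Pc i x else Qc i x)]
        congr 1
        · congr 1
          · apply Finset.prod_congr rfl
            intro i hi
            simp only [Finset.mem_filter, Finset.mem_univ, true_and] at hi
            exact if_pos hi
          · exact if_neg (by omega)
        · apply Finset.prod_congr rfl
          intro i hi
          simp only [Finset.mem_filter, Finset.mem_univ, true_and] at hi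
          exact if_neg (by omega)
      rw [e1, e2]; ring
    -- F : the head part
    set F : (Fin d → Bool) → ℝ := fun x =>
      (∏ i ∈ Finset.univ.filter (fun i : Fin d => (i : ℕ) < t), Pc i x)
        * |Pc jf x - Qc jf x| with hF
    have hFnonneg : ∀ x, 0 ≤ F x := by
      intro x
      simp only [hF]
      exact mul_nonneg (Finset.prod_nonneg fun i _ => hPc_nonneg i x) (abs_nonneg _)
    have habs : ∀ x : Fin d → Bool, |T (t + 1) x - T t x| =
        F x * ∏ i ∈ Finset.univ.filter (fun i : Fin d => t + 1 ≤ (i : ℕ) ∧ (i : ℕ) < d), Qc i x := by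
      intro x
      rw [hdiff x, abs_mul, abs_mul, abs_of_nonneg (Finset.prod_nonneg fun i _ => hPc_nonneg i x),
        abs_of_nonneg (Finset.prod_nonneg fun i _ => hQc_nonneg i x), hF]
    have hFdep : ∀ x y : Fin d → Bool,
        (∀ i : Fin d, (i : ℕ) < t + 1 → x i = y i) → F x = F y := by
      intro x y h
      simp only [hF]
      have h1 : (∏ i ∈ Finset.univ.filter (fun i : Fin d => (i : ℕ) < t), Pc i x)
          = ∏ i ∈ Finset.univ.filter (fun i : Fin d => (i : ℕ) < t), Pc i y := by
        apply Finset.prod_congr rfl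
        intro i hi
        simp only [Finset.mem_filter, Finset.mem_univ, true_and] at hi
        exact hPdep i x y (fun j' hj' => h j' (by omega))
      have h2 : Pc jf x = Pc jf y := hPdep jf x y (fun j' hj' => h j' (by rw [hjft] at hj'; omega))
      have h3 : Qc jf x = Qc jf y := hQdep jf x y (fun j' hj' => h j' (by rw [hjft] at hj'; omega))
      rw [h1, h2, h3]
    -- step 1: sum out the tail Qc kernels
    have huniv : Finset.univ.filter
        (fun x : Fin d → Bool => True ∧ ∀ i : Fin d, d ≤ (i : ℕ) → x i = false)
        = Finset.univ := by
      apply Finset.filter_true_of_mem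
      intro x _
      exact ⟨trivial, fun i hi => absurd i.isLt (by omega)⟩
    have hsum1 : (∑ x : Fin d → Bool, |T (t + 1) x - T t x|)
        = ∑ x ∈ Finset.univ.filter
            (fun x : Fin d → Bool => True ∧ ∀ i : Fin d, t + 1 ≤ (i : ℕ) → x i = false), F x := by
      have h2 := tailSum Qc hQdep hQc_sum (t + 1) F hFdep (fun _ => True)
        (fun _ _ _ => Iff.rfl) d (by omega) le_rfl
      rw [huniv] at h2
      rw [← h2]
      exact Finset.sum_congr rfl (fun x _ => habs x)
    -- step 2: pair-split the coordinate jf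
    have hp' : ∀ (x : Fin d → Bool) (b : Bool),
        ((True ∧ ∀ i : Fin d, t + 1 ≤ (i : ℕ) → (Function.update x jf b) i = false)
          ↔ (True ∧ ∀ i : Fin d, t + 1 ≤ (i : ℕ) → x i = false)) := by
      intro x b
      constructor
      · rintro ⟨-, h⟩
        refine ⟨trivial, fun i hi => ?_⟩
        have := h i hi
        rwa [Function.update_of_ne (by
          intro hcontra
          rw [hcontra, hjft] at hi
          omega)] at this
      · rintro ⟨-, h⟩
        refine ⟨trivial, fun i hi => ?_⟩
        rw [Function.update_of_ne (by
          intro hcontra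
          rw [hcontra, hjft] at hi
          omega)]
        exact h i hi
    have hsum2 : (∑ x ∈ Finset.univ.filter
          (fun x : Fin d → Bool => True ∧ ∀ i : Fin d, t + 1 ≤ (i : ℕ) → x i = false), F x)
        = ∑ x ∈ Finset.univ.filter
            (fun x : Fin d → Bool => ∀ i : Fin d, t ≤ (i : ℕ) → x i = false),
            (F x + F (Function.update x jf true)) := by
      rw [pairSplit jf _ hp' F]
      apply Finset.sum_congr _ (fun _ _ => rfl)
      apply Finset.filter_congr
      intro x _
      constructor
      · rintro ⟨⟨-, h1⟩, h2⟩
        intro i hi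
        rcases eq_or_lt_of_le hi with heq | hlt
        · have : i = jf := Fin.ext heq.symm
          rw [this]; exact h2
        · exact h1 i hlt
      · intro h
        exact ⟨⟨trivial, fun i hi => h i (by omega)⟩, h jf le_rfl⟩
    -- the marginal identity
    have margNonneg : ∀ z : Fin d → Bool, 0 ≤ marg jf z := by
      intro z
      rw [hmarg]
      exact Finset.sum_nonneg fun y _ => Finset.prod_nonneg fun i _ => hPc_nonneg i y
    have margDep : ∀ x y : Fin d → Bool,
        (∀ j' ∈ Par jf, x j' = y j') → marg jf x = marg jf y := by
      intro x y h
      rw [hmarg, hmarg]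
      apply Finset.sum_congr _ (fun _ _ => rfl)
      apply Finset.filter_congr
      intro w _
      constructor
      · intro hw j' hj'
        rw [← h j' hj']; exact hw j' hj'
      · intro hw j' hj'
        rw [h j' hj']; exact hw j' hj'
    have margEq : ∀ z : Fin d → Bool, marg jf z
        = ∑ y ∈ Finset.univ.filter
            (fun y : Fin d → Bool =>
              (∀ j' ∈ Par jf, y j' = z j') ∧ ∀ i : Fin d, t ≤ (i : ℕ) → y i = false),
            ∏ i ∈ Finset.univ.filter (fun i : Fin d => (i : ℕ) < t), Pc i y := by
      intro z
      have hparlt : ∀ j' ∈ Par jf, (j' : ℕ) < t := by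
        intro j' hj'
        have h5 := hPar_lt jf j' hj'
        exact h5
      have hqdep : ∀ x y : Fin d → Bool, (∀ i : Fin d, (i : ℕ) < t → x i = y i) →
          ((∀ j' ∈ Par jf, x j' = z j') ↔ (∀ j' ∈ Par jf, y j' = z j')) := by
        intro x y h
        constructor
        · intro hx j' hj'; rw [← h j' (hparlt j' hj')]; exact hx j' hj'
        · intro hx j' hj'; rw [h j' (hparlt j' hj')]; exact hx j' hj'
      have hfdep : ∀ x y : Fin d → Bool, (∀ i : Fin d, (i : ℕ) < t → x i = y i) →
          (∏ i ∈ Finset.univ.filter (fun i : Fin d => (i : ℕ) < t), Pc i x)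
            = ∏ i ∈ Finset.univ.filter (fun i : Fin d => (i : ℕ) < t), Pc i y := by
        intro x y h
        apply Finset.prod_congr rfl
        intro i hi
        simp only [Finset.mem_filter, Finset.mem_univ, true_and] at hi
        exact hPdep i x y (fun j' hj' => h j' (by omega))
      have hprodsplit : ∀ y : Fin d → Bool, (∏ i' : Fin d, Pc i' y)
          = (∏ i ∈ Finset.univ.filter (fun i : Fin d => (i : ℕ) < t), Pc i y)
            * ∏ i ∈ Finset.univ.filter (fun i : Fin d => t ≤ (i : ℕ) ∧ (i : ℕ) < d), Pc i y := by
        intro y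
        rw [← Finset.prod_filter_mul_prod_filter_not Finset.univ (fun i : Fin d => (i : ℕ) < t)
          (fun i => Pc i y)]
        congr 1
        apply Finset.prod_congr _ (fun _ _ => rfl)
        ext i
        simp only [Finset.mem_filter, Finset.mem_univ, true_and, not_lt]
        omega
      have hstart : Finset.univ.filter
          (fun y : Fin d → Bool =>
            (∀ j' ∈ Par jf, y j' = z j') ∧ ∀ i : Fin d, d ≤ (i : ℕ) → y i = false)
          = Finset.univ.filter (fun y : Fin d → Bool => ∀ j' ∈ Par jf, y j' = z j') := by
        apply Finset.filter_congr
        intro y _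
        constructor
        · exact fun h => h.1
        · exact fun h => ⟨h, fun i hi => absurd i.isLt (by omega)⟩
      calc marg jf z = ∑ y ∈ Finset.univ.filter
              (fun y : Fin d → Bool => ∀ j ∈ Par jf, y j = z j),
            ∏ i' : Fin d, Pc i' y := hmarg jf z
        _ = ∑ y ∈ Finset.univ.filter
              (fun y : Fin d → Bool =>
                (∀ j' ∈ Par jf, y j' = z j') ∧ ∀ i : Fin d, d ≤ (i : ℕ) → y i = false),
              ((∏ i ∈ Finset.univ.filter (fun i : Fin d => (i : ℕ) < t), Pc i y)
                * ∏ i ∈ Finset.univ.filter (fun i : Fin d => t ≤ (i : ℕ) ∧ (i : ℕ) < d), Pc i y) := by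
            rw [hstart]
            exact Finset.sum_congr rfl (fun y _ => hprodsplit y)
        _ = _ := tailSum Pc hPdep hPc_sum t _ hfdep _ hqdep d (by omega) le_rfl
    -- fiber decomposition
    set A : Finset (Fin d → Bool) := Finset.univ.filter
      (fun x : Fin d → Bool => ∀ i : Fin d, t ≤ (i : ℕ) → x i = false) with hA
    set g : (Fin d → Bool) → (Fin d → Bool) :=
      fun x i => if i ∈ Par jf then x i else false with hg
    have hfib : (∑ z : Fin d → Bool, ∑ x ∈ A.filter (fun x => g x = z),
          (F x + F (Function.update x jf true)))
        = ∑ x ∈ A, (F x + F (Function.update x jf true)) :=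
      Finset.sum_fiberwise_of_maps_to (fun x _ => Finset.mem_univ (g x)) _
    -- per fiber bound
    have hfiber : ∀ z : Fin d → Bool,
        (∑ x ∈ A.filter (fun x => g x = z), (F x + F (Function.update x jf true)))
          ≤ if (∀ i : Fin d, i ∉ Par jf → z i = false) then 2 * c else 0 := by
      intro z
      by_cases hz : ∀ i : Fin d, i ∉ Par jf → z i = false
      · rw [if_pos hz]
        have hsetmem : ∀ x ∈ A.filter (fun x => g x = z), (∀ j' ∈ Par jf, x j' = z j') := by
          intro x hx
          simp only [Finset.mem_filter] at hx
          intro j' hj'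
          have := congrFun hx.2 j'
          simpa [hg, hj'] using this
        have hsetA : ∀ x ∈ A.filter (fun x => g x = z), ∀ i : Fin d, t ≤ (i : ℕ) → x i = false := by
          intro x hx
          simp only [Finset.mem_filter, hA, Finset.mem_univ, true_and] at hx
          exact hx.1
        have hsetmem' : ∀ x : Fin d → Bool,
            (∀ j' ∈ Par jf, (Function.update x jf true) j' = x j') := by
          intro x j' hj'
          apply Function.update_of_ne
          exact Fin.ne_of_lt (hPar_lt jf j' hj')
        have hsetEq : A.filter (fun x => g x = z)
            = Finset.univ.filter
              (fun y : Fin d → Bool =>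
                (∀ j' ∈ Par jf, y j' = z j') ∧ ∀ i : Fin d, t ≤ (i : ℕ) → y i = false) := by
          ext x
          simp only [hA, Finset.mem_filter, Finset.mem_univ, true_and]
          constructor
          · rintro ⟨h1, h2⟩
            refine ⟨?_, h1⟩
            intro j' hj'
            have := congrFun h2 j'
            simpa [hg, hj'] using this
          · rintro ⟨h1, h2⟩
            refine ⟨h2, ?_⟩
            funext i
            by_cases hi : i ∈ Par jf
            · simp [hg, hi, h1 i hi]
            · simp [hg, hi, hz i hi]
        by_cases hm : marg jf z = 0
        · have hzero : ∀ x ∈ A.filter (fun x => g x = z),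
              F x + F (Function.update x jf true) = 0 := by
            intro x hx
            have hxz := hsetmem x hx
            have hmx : marg jf x = 0 := by rw [margDep x z hxz]; exact hm
            have hmx' : marg jf (Function.update x jf true) = 0 := by
              rw [margDep _ x (hsetmem' x)]; exact hmx
            have e1 : Qc jf x = Pc jf x := (hclose jf x).2 hmx
            have e2 : Qc jf (Function.update x jf true)
                = Pc jf (Function.update x jf true) := (hclose jf _).2 hmx'
            simp only [hF]
            simp [e1, e2]
          rw [Finset.sum_eq_zero hzero]
          positivity
        · have hmpos : 0 < marg jf z := lt_of_le_of_ne (margNonneg z) (Ne.symm hm)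
          calc (∑ x ∈ A.filter (fun x => g x = z), (F x + F (Function.update x jf true)))
              ≤ ∑ x ∈ A.filter (fun x => g x = z),
                  (∏ i ∈ Finset.univ.filter (fun i : Fin d => (i : ℕ) < t), Pc i x)
                    * (2 * (c / marg jf z)) := by
                apply Finset.sum_le_sum
                intro x hx
                have hxz := hsetmem x hx
                have hPprodEq : (∏ i ∈ Finset.univ.filter (fun i : Fin d => (i : ℕ) < t),
                    Pc i (Function.update x jf true))
                    = ∏ i ∈ Finset.univ.filter (fun i : Fin d => (i : ℕ) < t), Pc i x := by
                  apply Finset.prod_congr rfl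
                  intro i hi
                  simp only [Finset.mem_filter, Finset.mem_univ, true_and] at hi
                  apply hPdep
                  intro j' hj'
                  apply Function.update_of_ne
                  intro hcontra
                  rw [hcontra, hjft] at hj'
                  omega
                have hmx : marg jf x = marg jf z := margDep x z hxz
                have hmx' : marg jf (Function.update x jf true) = marg jf z := by
                  rw [margDep _ x (hsetmem' x)]; exact hmx
                have b1 : |Pc jf x - Qc jf x| ≤ c / marg jf z := by
                  rw [← hmx]
                  exact (hclose jf x).1 (by rw [hmx]; exact hmpos)
                have b2 : |Pc jf (Function.update x jf true) - Qc jf (Function.update x jf true)|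
                    ≤ c / marg jf z := by
                  rw [← hmx']
                  exact (hclose jf _).1 (by rw [hmx']; exact hmpos)
                have hid : F x + F (Function.update x jf true)
                    = (∏ i ∈ Finset.univ.filter (fun i : Fin d => (i : ℕ) < t), Pc i x)
                      * (|Pc jf x - Qc jf x|
                        + |Pc jf (Function.update x jf true) - Qc jf (Function.update x jf true)|) := by
                  simp only [hF]
                  rw [hPprodEq]
                  ring
                rw [hid]
                apply mul_le_mul_of_nonneg_left _ (Finset.prod_nonneg fun i _ => hPc_nonneg i x)
                linarith
            _ = (∑ x ∈ A.filter (fun x => g x = z),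
                  ∏ i ∈ Finset.univ.filter (fun i : Fin d => (i : ℕ) < t), Pc i x)
                    * (2 * (c / marg jf z)) := by rw [Finset.sum_mul]
            _ = marg jf z * (2 * (c / marg jf z)) := by rw [hsetEq, ← margEq z]
            _ = 2 * c := by field_simp
      · rw [if_neg hz]
        have hempty : A.filter (fun x => g x = z) = ∅ := by
          rw [Finset.filter_eq_empty_iff]
          intro x _ hgx
          apply hz
          intro i hi
          rw [← hgx]
          simp [hg, hi]
        rw [hempty]
        simp
    -- counting the fibers
    have hcard : (Finset.univ.filter
        (fun z : Fin d → Bool => ∀ i : Fin d, i ∉ Par jf → z i = false)).card ≤ 2 ^ k := by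
      have hinj : Set.InjOn (fun z : Fin d → Bool => (fun i : {i // i ∈ Par jf} => z i))
          (Finset.univ.filter
            (fun z : Fin d → Bool => ∀ i : Fin d, i ∉ Par jf → z i = false)) := by
        intro z hzm w hwm hzw
        simp only [Finset.coe_filter, Set.mem_setOf_eq, Finset.mem_univ, true_and] at hzm hwm
        funext i
        by_cases hi : i ∈ Par jf
        · exact congrFun hzw ⟨i, hi⟩
        · rw [hzm i hi, hwm i hi]
      have hle := Finset.card_le_card_of_injOn
        (fun z : Fin d → Bool => (fun i : {i // i ∈ Par jf} => z i))
        (fun _ _ => Finset.mem_univ _) hinj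
      calc (Finset.univ.filter
          (fun z : Fin d → Bool => ∀ i : Fin d, i ∉ Par jf → z i = false)).card
          ≤ (Finset.univ : Finset ({i // i ∈ Par jf} → Bool)).card := hle
        _ = 2 ^ (Par jf).card := by
            rw [Finset.card_univ, Fintype.card_fun, Fintype.card_bool, Fintype.card_coe]
        _ ≤ 2 ^ k := Nat.pow_le_pow_right (by norm_num) (hPar_card jf)
    -- put it together
    calc (∑ x : Fin d → Bool, |T (t + 1) x - T t x|)
        = ∑ x ∈ A, (F x + F (Function.update x jf true)) := by
          rw [hsum1, hsum2]
      _ = ∑ z : Fin d → Bool, ∑ x ∈ A.filter (fun x => g x = z),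
            (F x + F (Function.update x jf true)) := hfib.symm
      _ ≤ ∑ z : Fin d → Bool,
            (if (∀ i : Fin d, i ∉ Par jf → z i = false) then 2 * c else 0) :=
          Finset.sum_le_sum (fun z _ => hfiber z)
      _ = ∑ z ∈ Finset.univ.filter
            (fun z : Fin d → Bool => ∀ i : Fin d, i ∉ Par jf → z i = false), (2 * c) :=
          (Finset.sum_filter _ _).symm
      _ = ((Finset.univ.filter
            (fun z : Fin d → Bool => ∀ i : Fin d, i ∉ Par jf → z i = false)).card : ℝ)
            * (2 * c) := by
          rw [Finset.sum_const, nsmul_eq_mul]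
      _ ≤ 2 ^ k * (2 * c) := by
          apply mul_le_mul_of_nonneg_right _ (by positivity)
          calc ((Finset.univ.filter
              (fun z : Fin d → Bool => ∀ i : Fin d, i ∉ Par jf → z i = false)).card : ℝ)
              ≤ ((2 ^ k : ℕ) : ℝ) := by exact_mod_cast hcard
            _ = 2 ^ k := by push_cast; ring
  -- final assembly
  calc (∑ x : Fin d → Bool, |(∏ i, Pc i x) - ∏ i, Qc i x|)
      ≤ ∑ x : Fin d → Bool, ∑ t ∈ Finset.range d, |T (t + 1) x - T t x| :=
        Finset.sum_le_sum (fun x _ => tele x)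
    _ = ∑ t ∈ Finset.range d, ∑ x : Fin d → Bool, |T (t + 1) x - T t x| := Finset.sum_comm
    _ ≤ ∑ t ∈ Finset.range d, (2 ^ k * (2 * c) : ℝ) := Finset.sum_le_sum key
    _ = (d : ℝ) * (2 ^ k * (2 * c)) := by
        rw [Finset.sum_const, Finset.card_range, nsmul_eq_mul]
    _ = 2 * d * 2 ^ k * c := by ring
end
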